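/- Let H be a complex Hilbert space, (e_i)_{i ∈ I} a Hilbert (orthonormal) basis of H, and T : H → H a continuous linear operator such that T e_i = c_i · e_i for real numbers c_i. Let 0 < ε ≤ 1 and suppose there is an index i₀ with c_{i₀} ≥ 1/ε while c_i ≥ −1 for all i ∈ I. If f ∈ H satisfies ⟨f, e_{i₀}⟩ = ε and ‖f‖² = ε, then Re⟨T f, f⟩ ≥ ε². -/

import Mathlib

open scoped InnerProductSpace

/-- Abstract spectral decomposition argument: if `T` is a continuous linear operator on a
complex Hilbert space diagonalised by a Hilbert basis `(e i)` with real eigenvalues `c i`,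
all eigenvalues are `≥ −1`, some eigenvalue `c i₀ ≥ 1/ε`, and `f` satisfies
`⟪f, e i₀⟫ = ε` and `‖f‖² = ε`, then `Re ⟪T f, f⟫ ≥ ε²`. -/
theorem stmt_8 {H : Type*} [NormedAddCommGroup H] [InnerProductSpace ℂ H] [CompleteSpace H]
    {I : Type*} (e : HilbertBasis I ℂ H) (T : H →L[ℂ] H) (c : I → ℝ)
    (hT : ∀ i, T (e i) = (c i : ℂ) • e i)
    (ε : ℝ) (hε0 : 0 < ε) (hε1 : ε ≤ 1)
    (i₀ : I) (hi₀ : 1 / ε ≤ c i₀) (hc : ∀ i, -1 ≤ c i)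
    (f : H) (hf : ⟪f, e i₀⟫_ℂ = (ε : ℂ)) (hnorm : ‖f‖ ^ 2 = ε) :
    ε ^ 2 ≤ (⟪T f, f⟫_ℂ).re := by
  set a : I → ℂ := fun i => ⟪e i, f⟫_ℂ with ha
  have hmc : ∀ i, a i * starRingEnd ℂ (a i) = ((‖a i‖ ^ 2 : ℝ) : ℂ) := by
    intro i
    rw [Complex.mul_conj]
    norm_cast
    rw [← Complex.sq_norm]
  have hconja : ∀ i, ⟪f, e i⟫_ℂ = starRingEnd ℂ (a i) :=
    fun i => (inner_conj_symm f (e i)).symm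
  -- expansion of f
  have h1 : HasSum (fun i => a i • e i) f := by
    simpa [ha, HilbertBasis.repr_apply_apply] using e.hasSum_repr f
  -- apply T
  have h2 : HasSum (fun i => a i • ((c i : ℂ) • e i)) (T f) := by
    have := h1.mapL T
    simpa [hT] using this
  -- inner with f
  have h3 : HasSum (fun i => ⟪f, a i • ((c i : ℂ) • e i)⟫_ℂ) ⟪f, T f⟫_ℂ :=
    h2.mapL (innerSL ℂ f)
  have hterm : ∀ i, ⟪f, a i • ((c i : ℂ) • e i)⟫_ℂ = (((c i * ‖a i‖ ^ 2 : ℝ)) : ℂ) := by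
    intro i
    rw [inner_smul_right, inner_smul_right, hconja i]
    calc a i * ((c i : ℂ) * starRingEnd ℂ (a i))
        = (c i : ℂ) * (a i * starRingEnd ℂ (a i)) := by ring
      _ = (c i : ℂ) * ((‖a i‖ ^ 2 : ℝ) : ℂ) := by rw [hmc i]
      _ = (((c i * ‖a i‖ ^ 2 : ℝ)) : ℂ) := by rw [← Complex.ofReal_mul]
  simp only [hterm] at h3
  have h4 : HasSum (fun i => c i * ‖a i‖ ^ 2) (⟪f, T f⟫_ℂ).re := by
    simpa only [Complex.reCLM_apply, Complex.ofReal_re] using h3.mapL Complex.reCLM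
  -- Parseval
  have h5 : HasSum (fun i => ⟪f, e i⟫_ℂ * ⟪e i, f⟫_ℂ) ⟪f, f⟫_ℂ :=
    e.hasSum_inner_mul_inner f f
  have hterm2 : ∀ i, ⟪f, e i⟫_ℂ * ⟪e i, f⟫_ℂ = ((‖a i‖ ^ 2 : ℝ) : ℂ) := by
    intro i
    rw [hconja i]
    rw [mul_comm]
    exact hmc i
  simp only [hterm2] at h5
  have hff : ⟪f, f⟫_ℂ = ((ε : ℝ) : ℂ) := by
    rw [inner_self_eq_norm_sq_to_K, ← hnorm]
    norm_cast
  rw [hff] at h5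
  have h6 : HasSum (fun i => ‖a i‖ ^ 2) ε := by
    simpa only [Complex.reCLM_apply, Complex.ofReal_re] using h5.mapL Complex.reCLM
  -- combine
  have h7 : HasSum (fun i => c i * ‖a i‖ ^ 2 + ‖a i‖ ^ 2) ((⟪f, T f⟫_ℂ).re + ε) :=
    h4.add h6
  have hai₀ : ‖a i₀‖ = ε := by
    have h : a i₀ = starRingEnd ℂ (⟪f, e i₀⟫_ℂ) := (inner_conj_symm (e i₀) f).symm
    rw [h, hf]
    simp [abs_of_pos hε0]
  have hkey : c i₀ * ‖a i₀‖ ^ 2 + ‖a i₀‖ ^ 2 ≤ (⟪f, T f⟫_ℂ).re + ε := by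
    refine le_hasSum h7 i₀ fun j _ => ?_
    nlinarith [sq_nonneg (‖a j‖), hc j]
  have hε : ε + ε ^ 2 ≤ c i₀ * ‖a i₀‖ ^ 2 + ‖a i₀‖ ^ 2 := by
    rw [hai₀]
    have h1ε : 1 / ε * ε ^ 2 = ε := by field_simp
    nlinarith [mul_le_mul_of_nonneg_right hi₀ (sq_nonneg ε)]
  have hmain : ε ^ 2 ≤ (⟪f, T f⟫_ℂ).re := by linarith
  have hconj : (⟪T f, f⟫_ℂ).re = (⟪f, T f⟫_ℂ).re := by
    rw [← inner_conj_symm (T f) f, Complex.conj_re]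
  linarith [hconj ▸ hmain]
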